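/- For the flow-time LP with matching constraints, the dual solution given by α_i = (d_{u_i}(r_i) + d_{v_i}(r_i))/(2s) and β_{u,t} = d_u(t)/(2s) is feasible: for every job i and every time t ≥ r_i, α_i − β_{u_i,t} − β_{v_i,t} ≤ t − r_i, provided the scheduling algorithm with speed s removes at most s jobs incident to any fixed vertex per time step. -/
import Mathlib

lemma backlog_bound {V : Type*} (d : V → ℕ → ℝ) (s : ℝ)
    (hdrop : ∀ (w : V) (t : ℕ), d w t - s ≤ d w (t + 1))
    (w : V) (r t : ℕ) (ht : r ≤ t) :
    d w r - s * ((t : ℝ) - r) ≤ d w t := by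
  induction t, ht using Nat.le_induction with
  | base => simp
  | succ n hn ih =>
    have := hdrop w n
    push_cast
    nlinarith

/-- Feasibility of the dual solution `α_i = (d_{u_i}(r_i) + d_{v_i}(r_i))/(2s)`,
`β_{w,t} = d_w(t)/(2s)` for the flow-time LP: for every job `i` and time `t ≥ r_i`,
`α_i − β_{u_i,t} − β_{v_i,t} ≤ t − r_i`, given that (restricted to the relevant jobs)
the backlog at a vertex drops by at most `s` per time step, i.e. `d_w(t+1) ≥ d_w(t) − s`. -/
theorem dual_feasible_simple
    {V J : Type*} (u v : J → V) (r : J → ℕ) (d : V → ℕ → ℝ) (s : ℝ)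
    (hs : 0 < s)
    (hdrop : ∀ (w : V) (t : ℕ), d w t - s ≤ d w (t + 1))
    (i : J) (t : ℕ) (ht : r i ≤ t) :
    (d (u i) (r i) + d (v i) (r i)) / (2 * s)
      - d (u i) t / (2 * s) - d (v i) t / (2 * s) ≤ (t : ℝ) - (r i : ℝ) := by
  have h1 := backlog_bound d s hdrop (u i) (r i) t ht
  have h2 := backlog_bound d s hdrop (v i) (r i) t ht
  rw [div_sub_div_same, div_sub_div_same, div_le_iff₀ (by positivity)]
  nlinarith
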